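/- Let G = F(a,b) be the free group on two generators, with N = [G,G] and H = ⟨a⟩. Then the subgroup HN of G is not finitely generated. -/

import Mathlib

namespace Stmt6Aux

open SemidirectProduct Finsupp

abbrev B := Multiplicative (ℤ →₀ ℤ)

/-- shift automorphism of the base group -/
noncomputable def shiftAut (z : ℤ) : MulAut B :=
  AddEquiv.toMultiplicative (Finsupp.domCongr (Equiv.addRight z))

lemma shiftAut_apply (z : ℤ) (f : B) :
    Multiplicative.toAdd (shiftAut z f) = Finsupp.equivMapDomain (Equiv.addRight z) f.toAdd := rfl

lemma shiftAut_apply_apply (z : ℤ) (f : B) (k : ℤ) :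
    Multiplicative.toAdd (shiftAut z f) k = f.toAdd (k - z) := by
  rw [shiftAut_apply]
  simp [Finsupp.equivMapDomain_apply, sub_eq_add_neg]

noncomputable def ψ : Multiplicative ℤ →* MulAut B where
  toFun z := shiftAut z.toAdd
  map_one' := by
    refine MulEquiv.ext fun f => ?_
    refine Multiplicative.toAdd.injective (Finsupp.ext fun k => ?_)
    simp [shiftAut_apply_apply]
  map_mul' x y := by
    refine MulEquiv.ext fun f => ?_
    refine Multiplicative.toAdd.injective (Finsupp.ext fun k => ?_)
    have h1 : Multiplicative.toAdd (x * y) = Multiplicative.toAdd x + Multiplicative.toAdd y := rfl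
    show Multiplicative.toAdd (shiftAut (Multiplicative.toAdd (x*y)) f) k
      = Multiplicative.toAdd (shiftAut (Multiplicative.toAdd x) (shiftAut (Multiplicative.toAdd y) f)) k
    rw [h1, shiftAut_apply_apply, shiftAut_apply_apply, shiftAut_apply_apply]
    ring_nf

abbrev L := B ⋊[ψ] Multiplicative ℤ

noncomputable def φ : FreeGroup Bool →* L :=
  FreeGroup.lift (fun x => if x then inl (Multiplicative.ofAdd (Finsupp.single (0:ℤ) (1:ℤ)))
    else inr (Multiplicative.ofAdd (1:ℤ)))

end Stmt6Aux

open Stmt6Aux SemidirectProduct in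
/-- In `G = F(a,b)` with `N = [G,G]` and `H = ⟨a⟩`,
the subgroup `HN` is not finitely generated. -/
theorem stmt_6 :
    letI G := FreeGroup Bool
    letI a : G := FreeGroup.of true
    letI H : Subgroup G := Subgroup.closure {a}
    letI N : Subgroup G := commutator G
    ¬ (H ⊔ N).FG := by
  intro hFG
  set G := FreeGroup Bool with hG
  set a : G := FreeGroup.of true with ha
  set H : Subgroup G := Subgroup.closure {a} with hH
  set N : Subgroup G := commutator G with hN
  obtain ⟨S, hS⟩ := hFG
  -- every element of H ⊔ N maps into the kernel of rightHom
  have hright : ∀ g ∈ H ⊔ N, (rightHom : L →* Multiplicative ℤ) (φ g) = 1 := by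
    intro g hg
    have : (H ⊔ N) ≤ ((rightHom : L →* Multiplicative ℤ).comp φ).ker := by
      apply sup_le
      · rw [Subgroup.closure_le]
        rintro x rfl
        show (rightHom : L →* Multiplicative ℤ) (φ (FreeGroup.of true)) = 1
        rw [φ, FreeGroup.lift_apply_of]
        simp
      · exact Abelianization.commutator_subset_ker _
    exact this hg
  -- choose m outside all supports of generators
  classical
  set T : Finset ℤ := S.biUnion (fun s => ((φ s).left.toAdd).support) with hT
  obtain ⟨m, hm⟩ := Infinite.exists_notMem_finset T
  -- the key invariant
  have key : ∀ g ∈ H ⊔ N, (φ g).right = 1 ∧ ((φ g).left.toAdd) m = 0 := by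
    intro g hg
    rw [← hS] at hg
    induction hg using Subgroup.closure_induction with
    | mem x hx =>
      refine ⟨hright x (hS ▸ Subgroup.subset_closure hx), ?_⟩
      have : m ∉ ((φ x).left.toAdd).support := fun h => hm (Finset.mem_biUnion.2 ⟨x, hx, h⟩)
      simpa [Finsupp.notMem_support_iff] using this
    | one => simp
    | mul x y hx hy ihx ihy =>
      refine ⟨by simp [ihx.1, ihy.1], ?_⟩
      have h1 : (φ (x * y)).left = (φ x).left * (φ y).left := by
        rw [map_mul, mul_left, ihx.1, map_one, MulAut.one_apply]
      rw [h1]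
      simp [ihx.2, ihy.2]
    | inv x hx ihx =>
      have h1 : (φ x⁻¹).left = (φ x).left⁻¹ := by
        rw [map_inv, inv_left, ihx.1, inv_one, map_one, MulAut.one_apply]
      refine ⟨by simp [ihx.1], by rw [h1]; simp [ihx.2]⟩
  -- the witness element
  set b : G := FreeGroup.of false with hb
  set g₀ : G := b ^ m * a * (b ^ m)⁻¹ with hg₀
  have hg₀mem : g₀ ∈ H ⊔ N := by
    letI : Bracket G G := commutatorElement
    have h1 : ⁅b ^ m, a⁆ ∈ N := Subgroup.commutator_mem_commutator (Subgroup.mem_top _) (Subgroup.mem_top _)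
    have h2 : a ∈ H := Subgroup.subset_closure rfl
    have heq : g₀ = ⁅b ^ m, a⁆ * a := by
      rw [hg₀, commutatorElement_def]; group; rw [zpow_neg]
    rw [heq]
    exact Subgroup.mul_mem _ (Subgroup.mem_sup_right h1) (Subgroup.mem_sup_left h2)
  -- compute φ g₀
  have hφb : φ b = inr (Multiplicative.ofAdd (1:ℤ)) := by simp [φ, hb]
  have hφa : φ a = inl (Multiplicative.ofAdd (Finsupp.single (0:ℤ) (1:ℤ))) := by simp [φ, a]
  have hpow : (Multiplicative.ofAdd (1:ℤ)) ^ m = Multiplicative.ofAdd m := by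
    rw [← ofAdd_zsmul]; simp
  have hcalc : φ g₀ = inl (ψ (Multiplicative.ofAdd m) (Multiplicative.ofAdd (Finsupp.single (0:ℤ) (1:ℤ)))) := by
    rw [hg₀, map_mul, map_mul, map_inv, map_zpow, hφb, hφa, ← map_zpow, hpow, inl_aut, map_inv]
  have hval : ((φ g₀).left.toAdd) m = 1 := by
    rw [hcalc, left_inl]
    show (Multiplicative.toAdd (shiftAut (Multiplicative.toAdd (Multiplicative.ofAdd m))
      (Multiplicative.ofAdd (Finsupp.single (0:ℤ) (1:ℤ))))) m = 1
    rw [shiftAut_apply_apply]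
    simp only [toAdd_ofAdd, sub_self, Finsupp.single_eq_same]
  have := (key g₀ hg₀mem).2
  rw [hval] at this
  exact one_ne_zero this
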